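/- Let A be an associative ℚ-algebra with elements L₊, L₋, L₀, q₁, q₋₁, and a central element c. Define q_{±(m+1)} := (1/m)[L_±, q_{±m}] for m ≥ 1. Assume: [q₁, q₋₁] = c; [L₊, q₋₁] and [L₋, q₁] are central; [L₀, L_±] = ±L_±; [L₊, L₋] − 2L₀ is central; and [L₀, q_{±1}] = ±q_{±1}. Then for all m, n ≥ 1: [L₀, q_{±n}] = ±n·q_{±n}, [L₊, q_{−n}] = −n·q_{−(n−1)} for n ≥ 2, and [q_m, q_{−n}] = m·δ_{m,n}·c. -/

import Mathlib

/-- The sequence `q₁, q₂, q₃, …` defined by `q_{m+1} := (1/m)[L, q_m]` for `m ≥ 1`,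
starting from a given element `q₁` (the value at `0` is irrelevant). Here `⁅a,b⁆ = ab − ba`. -/
noncomputable def qSeq {A : Type*} [Ring A] [Algebra ℚ A] (L q1 : A) : ℕ → A
  | 0 => 0
  | 1 => q1
  | (m + 2) => ((m + 1 : ℚ))⁻¹ • ⁅L, qSeq L q1 (m + 1)⁆

/-- Let `A` be an associative `ℚ`-algebra with elements `L₊, L₋, L₀, q₁, q₋₁` and a central
element `c`, and define `q_{±(m+1)} := (1/m)[L_±, q_{±m}]` for `m ≥ 1`. Assume
`[q₁, q₋₁] = c`; `[L₊, q₋₁]` and `[L₋, q₁]` are central; `[L₀, L_±] = ±L_±`;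
`[L₊, L₋] − 2L₀` is central; and `[L₀, q_{±1}] = ±q_{±1}`. Then for all `m, n ≥ 1`:
`[L₀, q_{±n}] = ±n q_{±n}`, `[L₊, q_{−n}] = −n q_{−(n−1)}` for `n ≥ 2`, and
`[q_m, q_{−n}] = m δ_{m,n} c`. -/
theorem statement16 {A : Type*} [Ring A] [Algebra ℚ A]
    (Lp Lm L0 q1 qm1 c : A)
    (hc : ∀ a : A, c * a = a * c)
    (h1 : ⁅q1, qm1⁆ = c)
    (h2p : ∀ a : A, ⁅Lp, qm1⁆ * a = a * ⁅Lp, qm1⁆)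
    (h2m : ∀ a : A, ⁅Lm, q1⁆ * a = a * ⁅Lm, q1⁆)
    (h3p : ⁅L0, Lp⁆ = Lp) (h3m : ⁅L0, Lm⁆ = -Lm)
    (h4 : ∀ a : A, (⁅Lp, Lm⁆ - 2 • L0) * a = a * (⁅Lp, Lm⁆ - 2 • L0))
    (h5p : ⁅L0, q1⁆ = q1) (h5m : ⁅L0, qm1⁆ = -qm1) :
    (∀ n : ℕ, 1 ≤ n →
      ⁅L0, qSeq Lp q1 n⁆ = (n : ℚ) • qSeq Lp q1 n ∧
      ⁅L0, qSeq Lm qm1 n⁆ = -((n : ℚ) • qSeq Lm qm1 n)) ∧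
    (∀ n : ℕ, 2 ≤ n →
      ⁅Lp, qSeq Lm qm1 n⁆ = -((n : ℚ) • qSeq Lm qm1 (n - 1))) ∧
    (∀ m n : ℕ, 1 ≤ m → 1 ≤ n →
      ⁅qSeq Lp q1 m, qSeq Lm qm1 n⁆ = if m = n then (m : ℚ) • c else 0) := by
  letI : LieRing A := LieRing.ofAssociativeRing
  -- central element lemmas
  have lz : ∀ x : A, (∀ b : A, x * b = b * x) → ∀ a : A, ⁅x, a⁆ = 0 ∧ ⁅a, x⁆ = 0 := by
    intro x hx a
    constructor
    · rw [Ring.lie_def, hx a, sub_self]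
    · rw [Ring.lie_def, hx a, sub_self]
  -- cancellation of a nonzero rational scalar
  have cancel : ∀ (r : ℚ), r ≠ 0 → ∀ x y : A, r • x = r • y → x = y := by
    intro r hr x y h
    have := congrArg (fun z => r⁻¹ • z) h
    simpa [smul_smul, inv_mul_cancel₀ hr] using this
  have hkne : ∀ k : ℕ, ((k:ℚ)+1) ≠ 0 := fun k => by positivity
  -- the defining recurrence
  have key : ∀ (L q : A) (k : ℕ), ⁅L, qSeq L q (k+1)⁆ = ((k:ℚ)+1) • qSeq L q (k+2) := by
    intro L q k
    have h : qSeq L q (k+2) = ((k:ℚ)+1)⁻¹ • ⁅L, qSeq L q (k+1)⁆ := rfl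
    rw [h, smul_smul, mul_inv_cancel₀ (hkne k), one_smul]
  have key2 : ∀ (L q : A) (k : ℕ), ⁅L, qSeq L q (k+2)⁆ = ((k:ℚ)+2) • qSeq L q (k+3) := by
    intro L q k
    have h := key L q (k+1)
    rw [show k+1+1 = k+2 from rfl, show k+1+2 = k+3 from rfl] at h
    rw [h]; push_cast; module
  -- part (a), generic in the sign ε
  have partA : ∀ (L q : A) (ε : ℚ), ⁅L0, L⁆ = ε • L → ⁅L0, q⁆ = ε • q →
      ∀ k : ℕ, ⁅L0, qSeq L q (k+1)⁆ = (ε * ((k:ℚ)+1)) • qSeq L q (k+1) := by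
    intro L q ε hL hq k
    induction k with
    | zero =>
      show ⁅L0, q⁆ = (ε * (((0:ℕ):ℚ)+1)) • q
      rw [hq]; push_cast; module
    | succ k ih =>
      push_cast
      show ⁅L0, qSeq L q (k+2)⁆ = (ε * ((k:ℚ)+1+1)) • qSeq L q (k+2)
      apply cancel _ (hkne k)
      rw [← lie_smul, ← key L q k, leibniz_lie, hL, ih, smul_lie, lie_smul, key L q k]
      module
  have hAp : ∀ k : ℕ, ⁅L0, qSeq Lp q1 (k+1)⁆ = ((k:ℚ)+1) • qSeq Lp q1 (k+1) := by
    intro k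
    have := partA Lp q1 1 (by rw [h3p, one_smul]) (by rw [h5p, one_smul]) k
    rw [this]; module
  have hAm : ∀ k : ℕ, ⁅L0, qSeq Lm qm1 (k+1)⁆ = -(((k:ℚ)+1) • qSeq Lm qm1 (k+1)) := by
    intro k
    have := partA Lm qm1 (-1) (by rw [h3m]; module) (by rw [h5m]; module) k
    rw [this]; module
  have hAm2 : ∀ k : ℕ, ⁅L0, qSeq Lm qm1 (k+2)⁆ = -(((k:ℚ)+2) • qSeq Lm qm1 (k+2)) := by
    intro k
    have h := hAm (k+1)
    rw [show k+1+1 = k+2 from rfl] at h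
    rw [h]; push_cast; module
  -- bracket with [Lp,Lm]
  have hbr : ∀ x : A, ⁅⁅Lp, Lm⁆, x⁆ = ⁅L0, x⁆ + ⁅L0, x⁆ := by
    intro x
    have hsplit : ⁅Lp, Lm⁆ = (⁅Lp, Lm⁆ - 2 • L0) + (L0 + L0) := by
      rw [two_nsmul]; abel
    rw [hsplit, add_lie, (lz _ h4 x).1, zero_add, add_lie]
  -- part (b)
  have partB : ∀ k : ℕ, ⁅Lp, qSeq Lm qm1 (k+2)⁆ = -(((k:ℚ)+2) • qSeq Lm qm1 (k+1)) := by
    intro k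
    induction k with
    | zero =>
      show ⁅Lp, qSeq Lm qm1 2⁆ = -((((0:ℕ):ℚ)+2) • qSeq Lm qm1 1)
      have h2 : qSeq Lm qm1 2 = ⁅Lm, qm1⁆ := by simpa [qSeq] using (key Lm qm1 0).symm
      rw [show qSeq Lm qm1 1 = qm1 from rfl, h2, leibniz_lie, hbr, (lz _ h2p Lm).2, add_zero,
        h5m]
      push_cast; module
    | succ k ih =>
      push_cast
      show ⁅Lp, qSeq Lm qm1 (k+3)⁆ = -(((k:ℚ)+1+2) • qSeq Lm qm1 (k+2))
      apply cancel ((k:ℚ)+2) (by positivity)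
      rw [← lie_smul, ← key2 Lm qm1 k, leibniz_lie, hbr, hAm2 k, ih, lie_neg, lie_smul,
        key Lm qm1 k]
      module
  -- [q1, q⁻ₙ]
  have hq1n : ∀ k : ℕ, ⁅q1, qSeq Lm qm1 (k+1)⁆ = if k = 0 then c else 0 := by
    intro k
    have hcen : ∀ b : A, ⁅q1, Lm⁆ * b = b * ⁅q1, Lm⁆ := by
      intro b
      have h : ⁅q1, Lm⁆ = -⁅Lm, q1⁆ := (lie_skew _ _).symm
      rw [h, neg_mul, h2m b, mul_neg]
    induction k with
    | zero => simpa [qSeq] using h1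
    | succ k ih =>
      rw [if_neg (show ¬ (k+1 = 0) by omega)]
      show ⁅q1, qSeq Lm qm1 (k+2)⁆ = 0
      apply cancel _ (hkne k)
      rw [smul_zero, ← lie_smul, ← key Lm qm1 k, leibniz_lie, (lz _ hcen _).1, zero_add, ih]
      rcases Nat.eq_zero_or_pos k with hk | hk
      · subst hk; simpa using (lz _ hc Lm).2
      · rw [if_neg (by omega), lie_zero]
  -- part (c)
  have partC : ∀ j k : ℕ, ⁅qSeq Lp q1 (j+1), qSeq Lm qm1 (k+1)⁆
      = if j = k then ((j:ℚ)+1) • c else 0 := by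
    intro j
    induction j with
    | zero =>
      intro k
      rw [show qSeq Lp q1 (0+1) = q1 from rfl, hq1n k]
      rcases eq_or_ne k 0 with hk | hk
      · subst hk; simp
      · rw [if_neg hk, if_neg (by omega)]
    | succ j ih =>
      intro k
      push_cast
      show ⁅qSeq Lp q1 (j+2), qSeq Lm qm1 (k+1)⁆
          = if j+1 = k then ((j:ℚ)+1+1) • c else 0
      apply cancel _ (hkne j)
      rw [← smul_lie, ← key Lp q1 j, lie_lie]
      have hfst : ⁅Lp, ⁅qSeq Lp q1 (j+1), qSeq Lm qm1 (k+1)⁆⁆ = 0 := by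
        rw [ih k]
        rcases eq_or_ne j k with h | h
        · rw [if_pos h, lie_smul, (lz _ hc Lp).2, smul_zero]
        · rw [if_neg h, lie_zero]
      rw [hfst, zero_sub]
      rcases Nat.eq_zero_or_pos k with rfl | hk
      · rw [show qSeq Lm qm1 (0+1) = qm1 from rfl, (lz _ h2p _).2, neg_zero,
          if_neg (show ¬ (j+1 = 0) by omega), smul_zero]
      · obtain ⟨k', rfl⟩ : ∃ k', k = k' + 1 := ⟨k - 1, by omega⟩
        rw [show k'+1+1 = k'+2 from rfl, partB k', lie_neg, lie_smul, ih k', neg_neg]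
        rcases eq_or_ne j k' with h | h
        · subst h
          rw [if_pos rfl, if_pos rfl]
          push_cast; module
        · rw [if_neg h, if_neg (by omega), smul_zero, smul_zero]
  refine ⟨?_, ?_, ?_⟩
  · intro n hn
    obtain ⟨k, rfl⟩ : ∃ k, n = k + 1 := ⟨n - 1, by omega⟩
    refine ⟨?_, ?_⟩
    · rw [hAp k]; push_cast; module
    · rw [hAm k]; push_cast; module
  · intro n hn
    obtain ⟨k, rfl⟩ : ∃ k, n = k + 2 := ⟨n - 2, by omega⟩
    rw [partB k, show k + 2 - 1 = k + 1 from rfl]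
    push_cast; module
  · intro m n hm hn
    obtain ⟨j, rfl⟩ : ∃ j, m = j + 1 := ⟨m - 1, by omega⟩
    obtain ⟨k, rfl⟩ : ∃ k, n = k + 1 := ⟨n - 1, by omega⟩
    rw [partC j k]
    rcases eq_or_ne j k with h | h
    · subst h; rw [if_pos rfl, if_pos rfl]; push_cast; module
    · rw [if_neg h, if_neg (by omega)]
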